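/- Mantel's theorem: the maximum number of edges of an n-vertex triangle-free simple graph equals ⌊n²/4⌋. -/

import Mathlib

open Finset

open scoped Classical

noncomputable def edgeCount {V : Type} [Fintype V] (G : SimpleGraph V) : ℕ :=
  G.edgeFinset.card

noncomputable def triCount {V : Type} [Fintype V] [DecidableEq V] (G : SimpleGraph V) : ℕ :=
  (G.cliqueFinset 3).card

noncomputable def sqCount {V : Type} [Fintype V] [DecidableEq V] (G : SimpleGraph V) : ℕ :=
  ((univ : Finset (V × V × V × V)).filter fun p =>
    p.1 ≠ p.2.1 ∧ p.1 ≠ p.2.2.1 ∧ p.1 ≠ p.2.2.2 ∧ p.2.1 ≠ p.2.2.1 ∧ p.2.1 ≠ p.2.2.2 ∧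
      p.2.2.1 ≠ p.2.2.2 ∧ G.Adj p.1 p.2.1 ∧ G.Adj p.2.1 p.2.2.1 ∧ G.Adj p.2.2.1 p.2.2.2 ∧
      G.Adj p.2.2.2 p.1).card / 8

noncomputable def score {V : Type} [Fintype V] [DecidableEq V] (G : SimpleGraph V) : ℤ :=
  (edgeCount G : ℤ) - (triCount G : ℤ) - (sqCount G : ℤ)

def noC3 {V : Type} (G : SimpleGraph V) : Prop := G.CliqueFree 3

def noC4 {V : Type} (G : SimpleGraph V) : Prop :=
  ∀ a b c d : V, a ≠ b → a ≠ c → a ≠ d → b ≠ c → b ≠ d → c ≠ d →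
    G.Adj a b → G.Adj b c → G.Adj c d → ¬ G.Adj d a

noncomputable def extremalNum (n : ℕ) : ℕ :=
  ((univ : Finset (SimpleGraph (Fin n))).filter fun G => noC3 G ∧ noC4 G).sup edgeCount

noncomputable def gflip {V : Type} [DecidableEq V] (G : SimpleGraph V) (u v : V) : SimpleGraph V :=
  SimpleGraph.fromEdgeSet (symmDiff G.edgeSet {s(u, v)})


lemma myRangeEven (n : ℕ) : #((range n).filter fun v => v % 2 = 0) = (n+1)/2 := by
  induction n with
  | zero => simp
  | succ k ih =>
    rw [range_add_one, filter_insert]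
    by_cases h : k % 2 = 0
    · rw [if_pos h, card_insert_of_notMem (by simp), ih]; omega
    · rw [if_neg h, ih]; omega

lemma myFinEven (n : ℕ) :
    #((univ : Finset (Fin n)).filter fun v : Fin n => (v : ℕ) % 2 = 0) = (n+1)/2 := by
  rw [card_filter, Fin.sum_univ_eq_sum_range (fun i => if i % 2 = 0 then 1 else 0),
    ← card_filter, myRangeEven]

lemma myFinOdd (n : ℕ) :
    #((univ : Finset (Fin n)).filter fun v : Fin n => ¬ (v : ℕ) % 2 = 0) = n/2 := by
  have h := card_filter_add_card_filter_not (s := (univ : Finset (Fin n)))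
    (p := fun v : Fin n => (v : ℕ) % 2 = 0)
  rw [myFinEven, card_univ, Fintype.card_fin] at h
  omega

lemma myTuranEdges (n : ℕ) : #(SimpleGraph.turanGraph n 2).edgeFinset = n ^ 2 / 4 := by
  have hdeg : ∀ v : Fin n, (SimpleGraph.turanGraph n 2).degree v
      = if (v : ℕ) % 2 = 0 then n/2 else (n+1)/2 := by
    intro v
    rw [SimpleGraph.degree, SimpleGraph.neighborFinset_eq_filter]
    by_cases h : (v : ℕ) % 2 = 0
    · rw [if_pos h, ← myFinOdd n]
      apply Finset.card_bij (fun w _ => w) <;>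
        simp only [mem_filter, mem_univ, true_and, SimpleGraph.turanGraph_adj] <;> intros <;>
        first
          | omega
          | (rename_i w hw; exact ⟨w, by omega, rfl⟩)
    · rw [if_neg h, ← myFinEven n]
      apply Finset.card_bij (fun w _ => w) <;>
        simp only [mem_filter, mem_univ, true_and, SimpleGraph.turanGraph_adj] <;> intros <;>
        first
          | omega
          | (rename_i w hw; exact ⟨w, by omega, rfl⟩)
  have hsum := SimpleGraph.sum_degrees_eq_twice_card_edges (SimpleGraph.turanGraph n 2)
  rw [Finset.sum_congr rfl (fun v _ => hdeg v), Finset.sum_ite, Finset.sum_const,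
    Finset.sum_const, smul_eq_mul, smul_eq_mul, myFinEven, myFinOdd] at hsum
  have key : (n+1)/2 * (n/2) = n ^ 2 / 4 := by
    rcases Nat.even_or_odd n with ⟨k, rfl⟩ | ⟨k, rfl⟩
    · have h1 : (k + k) ^ 2 = 4 * (k * k) := by ring
      rw [h1]
      have e2 : (k+k+1)/2 = k := by omega
      have e3 : (k+k)/2 = k := by omega
      rw [e2, e3, Nat.mul_div_cancel_left _ (by norm_num)]
    · have h1 : (2*k + 1) ^ 2 = 4 * (k * (k+1)) + 1 := by ring
      rw [h1]
      have h2 : (2*k+1+1)/2 = k+1 := by omega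
      have h3 : (2*k+1)/2 = k := by omega
      rw [h2, h3]
      have h4 : (k+1) * k = k * (k+1) := by ring
      rw [h4]
      generalize k * (k+1) = m
      omega
  rw [Nat.mul_comm (n/2) ((n+1)/2)] at hsum
  omega

theorem stmt_6 (n : ℕ) :
    ((univ : Finset (SimpleGraph (Fin n))).filter fun G => G.CliqueFree 3).sup edgeCount
      = n ^ 2 / 4 := by
  have hT := SimpleGraph.isTuranMaximal_turanGraph (n := n) (r := 2) (by norm_num)
  apply le_antisymm
  · apply Finset.sup_le
    intro G hG
    rw [mem_filter] at hG
    rw [← myTuranEdges n]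
    have h2 := hT.2 (G' := G) hG.2
    unfold edgeCount
    convert h2 using 2 <;> exact Subsingleton.elim _ _
  · rw [← myTuranEdges n]
    have hmem : SimpleGraph.turanGraph n 2 ∈
        (univ : Finset (SimpleGraph (Fin n))).filter fun G => G.CliqueFree 3 := by
      rw [mem_filter]
      exact ⟨mem_univ _, SimpleGraph.turanGraph_cliqueFree (by norm_num)⟩
    have hle := Finset.le_sup (f := edgeCount) hmem
    have : edgeCount (SimpleGraph.turanGraph n 2) = #(SimpleGraph.turanGraph n 2).edgeFinset := by
      unfold edgeCount
      congr!
    rw [this] at hle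
    exact hle
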